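/- Let R be a commutative ring and B a separable commutative R-algebra which is finitely generated and projective as an R-module. Then B is an étale R-algebra, i.e. R → B is flat, of finite presentation, and formally unramified (equivalently, formally étale and of finite presentation). -/

import Mathlib

open scoped TensorProduct

universe u

/-- `e : A ⊗[R] A` is a separability idempotent for the commutative `R`-algebra `A`:
the multiplication map `μ : A ⊗[R] A → A` sends `e` to `1`, and
`(a ⊗ 1) * e = (1 ⊗ a) * e` for all `a : A`. `A` is separable if such `e` exists. -/
def IsSeparabilityIdempotent (R A : Type*) [CommRing R] [CommRing A] [Algebra R A]
    (e : A ⊗[R] A) : Prop :=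
  Algebra.TensorProduct.lmul' (S := A) R e = 1 ∧
    ∀ a : A, (a ⊗ₜ[R] (1 : A)) * e = ((1 : A) ⊗ₜ[R] a) * e

/-- A separable algebra which is projective as a module is formally smooth, by the classical
Hochschild-cohomological correction of an arbitrary module-theoretic lift. -/
theorem formallySmooth_of_sep {R B : Type u} [CommRing R] [CommRing B] [Algebra R B]
    (e : B ⊗[R] B) (he : IsSeparabilityIdempotent R B e)
    [Module.Projective R B] : Algebra.FormallySmooth R B := by
  obtain ⟨he1, he2⟩ := he
  refine Algebra.FormallySmooth.of_comp_surjective ?_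
  intro C _ _ I hI f
  obtain ⟨g, hg⟩ := Module.projective_lifting_property (Ideal.Quotient.mkₐ R I).toLinearMap
    f.toLinearMap Ideal.Quotient.mk_surjective
  have hgval : ∀ b, Ideal.Quotient.mk I (g b) = f b := fun b => LinearMap.congr_fun hg b
  have key0 : ∀ x y : C, x ∈ I → y ∈ I → x * y = 0 := by
    intro x y hx hy
    have : x * y ∈ I ^ 2 := by rw [pow_two]; exact Ideal.mul_mem_mul hx hy
    rwa [hI, Ideal.mem_bot] at this
  -- the 2-cocycle measuring failure of multiplicativity of g
  set δ : B →ₗ[R] B →ₗ[R] C := LinearMap.mk₂ R (fun a b => g (a * b) - g a * g b)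
    (fun a a' b => by rw [add_mul, map_add, map_add]; ring)
    (fun r a b => by rw [smul_mul_assoc, map_smul, map_smul, smul_mul_assoc, smul_sub])
    (fun a b b' => by rw [mul_add, map_add, map_add]; ring)
    (fun r a b => by rw [mul_smul_comm, map_smul, map_smul, mul_smul_comm, smul_sub])
    with hδ
  have hδ_apply : ∀ a b, δ a b = g (a * b) - g a * g b := fun a b => rfl
  have hδI : ∀ a b, δ a b ∈ I := by
    intro a b
    rw [← Ideal.Quotient.eq_zero_iff_mem, hδ_apply, map_sub, map_mul (Ideal.Quotient.mk I),
      hgval, hgval, hgval, ← map_mul f, sub_self]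
  -- the combinator sending u, v to the linear map x ⊗ y ↦ u x * v y
  set P : (B →ₗ[R] C) → (B →ₗ[R] C) → (B ⊗[R] B →ₗ[R] C) :=
    fun u v => (LinearMap.mul' R C) ∘ₗ (TensorProduct.map u v) with hP
  have hP_tmul : ∀ u v (x y : B), P u v (x ⊗ₜ[R] y) = u x * v y := by
    intro u v x y; simp [hP]
  set φ : B → C := fun c => P g (δ.flip c) e with hφ
  have hφI : ∀ c, φ c ∈ I := by
    intro c
    have : ∀ t : B ⊗[R] B, P g (δ.flip c) t ∈ I := by
      intro t
      induction t using TensorProduct.induction_on with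
      | zero => simp
      | tmul x y => rw [hP_tmul]; exact I.mul_mem_left _ (hδI y c)
      | add s t hs ht => rw [map_add]; exact I.add_mem hs ht
    exact this e
  set m : B ⊗[R] B →ₗ[R] C := P g g with hm
  have hmπ : ∀ t : B ⊗[R] B, Ideal.Quotient.mk I (m t)
      = f (Algebra.TensorProduct.lmul' (S := B) R t) := by
    intro t
    induction t using TensorProduct.induction_on with
    | zero => simp
    | tmul x y =>
        rw [hm, hP_tmul, map_mul, hgval, hgval, Algebra.TensorProduct.lmul'_apply_tmul, map_mul]
    | add s t hs ht => rw [map_add, map_add, map_add, map_add, hs, ht]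
  have hmI : m e - 1 ∈ I := by
    rw [← Ideal.Quotient.eq_zero_iff_mem, map_sub, hmπ, he1, map_one, map_one, sub_self]
  have key1 : ∀ c ∈ I, m e * c = c := by
    intro c hc
    have := key0 _ _ hmI hc
    rw [sub_mul, one_mul, sub_eq_zero] at this
    exact this
  -- Step I : P g (δ.flip b ∘ₗ mulRight a) e = g a * φ b
  have stepI : ∀ a b : B, P g (δ.flip b ∘ₗ LinearMap.mulRight R a) e = g a * φ b := by
    intro a b
    have h1 : ∀ t : B ⊗[R] B, P g (δ.flip b) (((1 : B) ⊗ₜ[R] a) * t)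
        = P g (δ.flip b ∘ₗ LinearMap.mulRight R a) t := by
      intro t
      induction t using TensorProduct.induction_on with
      | zero => simp
      | tmul x y =>
          rw [Algebra.TensorProduct.tmul_mul_tmul, one_mul, hP_tmul, hP_tmul]
          simp only [LinearMap.comp_apply, LinearMap.mulRight_apply, LinearMap.flip_apply]
          rw [mul_comm a y]
      | add s t hs ht => rw [mul_add, map_add, map_add, hs, ht]
    have h3 : ∀ t : B ⊗[R] B, P (δ a) (δ.flip b) t = 0 := by
      intro t
      induction t using TensorProduct.induction_on with
      | zero => simp
      | tmul x y => rw [hP_tmul]; exact key0 _ _ (hδI a x) (hδI y b)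
      | add s t hs ht => rw [map_add, hs, ht, add_zero]
    have h2 : ∀ t : B ⊗[R] B, P g (δ.flip b) ((a ⊗ₜ[R] (1 : B)) * t)
        = g a * P g (δ.flip b) t + P (δ a) (δ.flip b) t := by
      intro t
      induction t using TensorProduct.induction_on with
      | zero => simp
      | tmul x y =>
          rw [Algebra.TensorProduct.tmul_mul_tmul, hP_tmul, hP_tmul, hP_tmul]
          simp only [LinearMap.flip_apply, one_mul]
          have : g (a * x) = δ a x + g a * g x := by rw [hδ_apply]; ring
          rw [this]; ring
      | add s t hs ht =>
          rw [mul_add, map_add, map_add, map_add, hs, ht]; ring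
    rw [← h1 e, ← he2 a, h2 e, h3 e, add_zero, hφ]
  -- right multiplication comes out of P
  have hPright : ∀ (v : B →ₗ[R] C) (c : C) (t : B ⊗[R] B),
      P g ((LinearMap.mul R C).flip c ∘ₗ v) t = P g v t * c := by
    intro v c t
    induction t using TensorProduct.induction_on with
    | zero => simp
    | tmul x y =>
        rw [hP_tmul, hP_tmul]
        simp only [LinearMap.comp_apply, LinearMap.flip_apply, LinearMap.mul_apply']
        rw [mul_assoc]
    | add s t hs ht => rw [map_add, map_add, hs, ht, add_mul]
  -- the master identity
  have master : ∀ a b : B, δ a b = g a * φ b - φ (a * b) + φ a * g b := by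
    intro a b
    have cocycle : ∀ y : B, g y * δ a b
        = δ (y * a) b - δ y (a * b) + δ y a * g b := by
      intro y
      simp only [hδ_apply, mul_assoc]
      ring
    have hco : ∀ t : B ⊗[R] B, m t * δ a b
        = P g (δ.flip b ∘ₗ LinearMap.mulRight R a) t - P g (δ.flip (a * b)) t
          + P g ((LinearMap.mul R C).flip (g b) ∘ₗ δ.flip a) t := by
      intro t
      induction t using TensorProduct.induction_on with
      | zero => simp
      | tmul x y =>
          rw [hm, hP_tmul, hP_tmul, hP_tmul, hP_tmul]
          simp only [LinearMap.comp_apply, LinearMap.flip_apply, LinearMap.mulRight_apply,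
            LinearMap.mul_apply']
          have := cocycle y
          calc g x * g y * δ a b = g x * (g y * δ a b) := by ring
            _ = g x * (δ (y * a) b - δ y (a * b) + δ y a * g b) := by rw [this]
            _ = _ := by ring
      | add s t hs ht =>
          rw [map_add, map_add, map_add, map_add, add_mul, hs, ht]; ring
    have h4 := hco e
    rw [key1 _ (hδI a b), stepI a b, hPright (δ.flip a) (g b) e] at h4
    rw [h4, hφ]
  -- the corrected lift
  have hone : g 1 + φ 1 = 1 := by
    have hδ1 : δ.flip 1 = (LinearMap.mul R C).flip (1 - g 1) ∘ₗ g := by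
      ext y
      simp only [LinearMap.flip_apply, LinearMap.comp_apply, LinearMap.mul_apply', hδ_apply,
        mul_one]
      ring
    have h1I : (1 : C) - g 1 ∈ I := by
      rw [← Ideal.Quotient.eq_zero_iff_mem, map_sub, map_one, hgval, map_one, sub_self]
    have : φ 1 = 1 - g 1 := by
      rw [hφ]
      show P g (δ.flip 1) e = 1 - g 1
      rw [hδ1, hPright g (1 - g 1) e]
      exact key1 _ h1I
    rw [this]; ring
  have hPadd : ∀ (v v' : B →ₗ[R] C) (t : B ⊗[R] B),
      P g (v + v') t = P g v t + P g v' t := by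
    intro v v' t
    induction t using TensorProduct.induction_on with
    | zero => simp
    | tmul x y => rw [hP_tmul, hP_tmul, hP_tmul]; simp [mul_add]
    | add s t hs ht => rw [map_add, map_add, map_add, hs, ht]; ring
  have hPsmul : ∀ (v : B →ₗ[R] C) (r : R) (t : B ⊗[R] B),
      P g (r • v) t = r • P g v t := by
    intro v r t
    induction t using TensorProduct.induction_on with
    | zero => simp
    | tmul x y => rw [hP_tmul, hP_tmul]; simp [mul_smul_comm]
    | add s t hs ht => rw [map_add, map_add, hs, ht, smul_add]
  have hφadd : ∀ b b', φ (b + b') = φ b + φ b' := by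
    intro b b'
    rw [hφ]
    show P g (δ.flip (b + b')) e = P g (δ.flip b) e + P g (δ.flip b') e
    rw [map_add δ.flip, hPadd]
  have hφsmul : ∀ (r : R) b, φ (r • b) = r • φ b := by
    intro r b
    rw [hφ]
    show P g (δ.flip (r • b)) e = r • P g (δ.flip b) e
    rw [map_smul δ.flip, hPsmul]
  have hmul : ∀ a b : B, g (a * b) + φ (a * b) = (g a + φ a) * (g b + φ b) := by
    intro a b
    have h5 := master a b
    rw [hδ_apply] at h5
    have h6 : φ a * φ b = 0 := key0 _ _ (hφI a) (hφI b)
    calc g (a * b) + φ (a * b)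
        = g a * g b + (g (a * b) - g a * g b) + φ (a * b) := by ring
      _ = g a * g b + g a * φ b + φ a * g b + φ a * φ b := by rw [h5, h6]; ring
      _ = (g a + φ a) * (g b + φ b) := by ring
  have hzero : g 0 + φ 0 = 0 := by
    have : φ 0 = 0 := by
      have := hφsmul 0 0
      rwa [zero_smul, zero_smul] at this
    rw [this, map_zero, add_zero]
  let h₀ : B →+* C :=
    { toFun := fun b => g b + φ b
      map_one' := hone
      map_mul' := fun a b => hmul a b
      map_zero' := hzero
      map_add' := fun a b => by
        show g (a + b) + φ (a + b) = (g a + φ a) + (g b + φ b)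
        rw [map_add, hφadd]; ring }
  let h : B →ₐ[R] C := AlgHom.mk' h₀ (fun r b => by
    show g (r • b) + φ (r • b) = r • (g b + φ b)
    rw [map_smul, hφsmul, smul_add])
  refine ⟨h, ?_⟩
  ext b
  have : Ideal.Quotient.mk I (g b + φ b) = f b := by
    rw [map_add, hgval, (Ideal.Quotient.eq_zero_iff_mem).mpr (hφI b), add_zero]
  simpa [h, h₀] using this

open MvPolynomial in
/-- An algebra that is finitely generated and projective as a module is finitely presented
as an algebra. -/
theorem fp_of_finite_projective {R B : Type u} [CommRing R] [CommRing B] [Algebra R B]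
    [Module.Finite R B] [Module.Projective R B] : Algebra.FinitePresentation R B := by
  classical
  obtain ⟨n, x, hx⟩ := Module.Finite.exists_fin (R := R) (M := B)
  have hmem : ∀ b : B, ∃ c : Fin n → R, ∑ i, c i • x i = b := by
    intro b
    exact (Submodule.mem_span_range_iff_exists_fun R).mp (hx ▸ Submodule.mem_top)
  choose a ha using fun i j => hmem (x i * x j)
  obtain ⟨c, hc⟩ := hmem 1
  set P := MvPolynomial (Fin n) R with hPdef
  set rel : Fin n × Fin n → P :=
    fun p => X p.1 * X p.2 - ∑ k, C (a p.1 p.2 k) * X k with hrel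
  set r0 : P := 1 - ∑ k, C (c k) * X k with hr0
  set I0 : Ideal P := Ideal.span (insert r0 (Set.range rel)) with hI0
  set f : P →ₐ[R] B := aeval x with hf
  have haeval : ∀ (d : Fin n → R), f (∑ k, C (d k) * X k) = ∑ k, d k • x k := by
    intro d
    rw [map_sum]
    refine Finset.sum_congr rfl fun k _ => ?_
    rw [map_mul, aeval_C, aeval_X, Algebra.smul_def]
  have hf0 : ∀ p ∈ insert r0 (Set.range rel), f p = 0 := by
    rintro p (rfl | ⟨⟨i, j⟩, rfl⟩)
    · rw [hr0, map_sub, map_one, haeval, hc, sub_self]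
    · rw [hrel]
      dsimp only
      rw [map_sub, map_mul, aeval_X, aeval_X, haeval, ha, sub_self]
  have hI0ker : I0 ≤ RingHom.ker f := by
    rw [hI0, Ideal.span_le]
    intro p hp
    exact hf0 p hp
  set fbar : (P ⧸ I0) →ₐ[R] B := Ideal.Quotient.liftₐ I0 f (fun p hp => hI0ker hp) with hfbar
  have hfbar_mk : ∀ p : P, fbar (Ideal.Quotient.mk I0 p) = f p := fun p =>
    Ideal.Quotient.liftₐ_apply I0 f _ p
  have hfbar_surj : Function.Surjective fbar := by
    intro b
    obtain ⟨d, hd⟩ := hmem b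
    exact ⟨Ideal.Quotient.mk I0 (∑ k, C (d k) * X k), by rw [hfbar_mk, haeval, hd]⟩
  set y : Fin n → P ⧸ I0 := fun i => Ideal.Quotient.mk I0 (X i) with hy
  set S : Submodule R (P ⧸ I0) := Submodule.span R (insert 1 (Set.range y)) with hS
  have h1S : (1 : P ⧸ I0) ∈ S := Submodule.subset_span (Set.mem_insert _ _)
  have hyS : ∀ i, y i ∈ S := fun i =>
    Submodule.subset_span (Set.mem_insert_iff.mpr (Or.inr ⟨i, rfl⟩))
  have hyy : ∀ i j, y i * y j = ∑ k, a i j k • y k := by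
    intro i j
    have : Ideal.Quotient.mk I0 (rel (i, j)) = 0 := by
      rw [Ideal.Quotient.eq_zero_iff_mem]
      exact Ideal.subset_span (Set.mem_insert_iff.mpr (Or.inr ⟨(i, j), rfl⟩))
    rw [hrel] at this
    dsimp only at this
    rw [map_sub, sub_eq_zero, map_mul, map_sum] at this
    rw [hy]
    rw [this]
    refine Finset.sum_congr rfl fun k _ => ?_
    have hsm : (C (a i j k) * X k : P) = a i j k • (X k : P) := by
      rw [MvPolynomial.smul_eq_C_mul]
    rw [hsm, ← Ideal.Quotient.mkₐ_eq_mk R I0, map_smul]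
  have hmulS : ∀ z ∈ S, ∀ i, z * y i ∈ S := by
    intro z hz i
    induction hz using Submodule.span_induction with
    | mem w hw =>
        rcases hw with rfl | ⟨j, rfl⟩
        · rw [one_mul]; exact hyS i
        · rw [hyy j i]
          exact Submodule.sum_mem _ fun k _ => Submodule.smul_mem _ _ (hyS k)
    | zero => rw [zero_mul]; exact S.zero_mem
    | add u v _ _ hu hv => rw [add_mul]; exact S.add_mem hu hv
    | smul r u _ hu => rw [smul_mul_assoc]; exact S.smul_mem _ hu
  have hStop : S = ⊤ := by
    rw [eq_top_iff]
    rintro z -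
    obtain ⟨p, rfl⟩ := Ideal.Quotient.mk_surjective z
    induction p using MvPolynomial.induction_on with
    | C r =>
        have hsm : (C r : P) = r • (1 : P) := by
          rw [MvPolynomial.smul_eq_C_mul, mul_one]
        rw [hsm, ← Ideal.Quotient.mkₐ_eq_mk R I0, map_smul, map_one]
        exact S.smul_mem _ h1S
    | add p q hp hq => rw [map_add]; exact S.add_mem hp hq
    | mul_X p i hp => rw [map_mul]; exact hmulS _ hp i
  have hA0fin : Module.Finite R (P ⧸ I0) := by
    refine ⟨⟨insert 1 (Finset.image y Finset.univ), ?_⟩⟩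
    rw [← hStop, hS]
    congr 1
    simp [Set.image_univ]
  have hBfp : Module.FinitePresentation R B := Module.finitePresentation_of_projective R B
  have hker_fg : (LinearMap.ker fbar.toLinearMap).FG :=
    Module.FinitePresentation.fg_ker fbar.toLinearMap hfbar_surj
  obtain ⟨T, hT⟩ := hker_fg
  have hker_ideal_fg : (RingHom.ker fbar).FG := by
    refine ⟨T, le_antisymm ?_ ?_⟩
    · rw [Ideal.span_le]
      intro z hz
      have : z ∈ LinearMap.ker fbar.toLinearMap := hT ▸ Submodule.subset_span hz
      simpa [RingHom.mem_ker, LinearMap.mem_ker] using this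
    · intro z hz
      have hz0 : fbar z = 0 := RingHom.mem_ker.mp hz
      have hz' : z ∈ Submodule.span R (T : Set (P ⧸ I0)) := by
        rw [hT]; exact LinearMap.mem_ker.mpr hz0
      exact Submodule.span_le_restrictScalars R (P ⧸ I0) (T : Set (P ⧸ I0)) hz'
  have hI0fg : I0.FG := by
    rw [hI0]
    exact Submodule.fg_span ((Set.finite_range rel).insert r0)
  have hA0fp : Algebra.FinitePresentation R (P ⧸ I0) :=
    Algebra.FinitePresentation.quotient hI0fg
  have := Algebra.FinitePresentation.quotient (R := R) hker_ideal_fg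
  exact Algebra.FinitePresentation.of_surjective hfbar_surj hker_ideal_fg

/-- A separable commutative `R`-algebra `B` which is finitely generated projective as an
`R`-module is étale: `R → B` is flat, of finite presentation, and formally unramified
(equivalently, formally étale and of finite presentation). -/
theorem separable_finite_projective_etale {R B : Type u} [CommRing R] [CommRing B]
    [Algebra R B] (hsep : ∃ e : B ⊗[R] B, IsSeparabilityIdempotent R B e)
    [Module.Finite R B] [Module.Projective R B] :
    Module.Flat R B ∧ Algebra.FinitePresentation R B ∧
      Algebra.FormallyUnramified R B ∧ Algebra.FormallyEtale R B := by
  obtain ⟨e, he⟩ := hsep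
  haveI hsm : Algebra.FormallySmooth R B := formallySmooth_of_sep e he
  have hfp : Algebra.FinitePresentation R B := fp_of_finite_projective
  haveI hur : Algebra.FormallyUnramified R B := by
    rw [Algebra.FormallyUnramified.iff_exists_tensorProduct]
    exact ⟨e, fun s => by rw [sub_mul, he.2 s, sub_self], he.1⟩
  exact ⟨inferInstance, hfp, hur,
    Algebra.FormallyEtale.of_formallyUnramified_and_formallySmooth⟩
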